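/- If G is a group with left 2-unique products and R is a (not necessarily commutative) domain, then the group ring RG contains no left engulfing elements; that is, for any nonzero a, b ∈ RG with supp(ab) ⊆ supp(b), one has a ∈ R (i.e., supp(a) ⊆ {1}). -/

import Mathlib

/-- A group `G` has *left 2-unique products* if for any finite subsets `A, B ⊆ G`
with `|A| ≥ 2` and `B` nonempty, there exist two elements `a₁b₁, a₂b₂ ∈ AB`,
each uniquely represented as a product of an element of `A` and an element of `B`,
with `a₁ ≠ a₂`. -/
def LeftTwoUniqueProducts (G : Type*) [Group G] : Prop :=
  ∀ (A B : Finset G), 2 ≤ A.card → B.Nonempty →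
    ∃ a₁ ∈ A, ∃ b₁ ∈ B, ∃ a₂ ∈ A, ∃ b₂ ∈ B, a₁ ≠ a₂ ∧
      (∀ a ∈ A, ∀ b ∈ B, a * b = a₁ * b₁ → a = a₁ ∧ b = b₁) ∧
      (∀ a ∈ A, ∀ b ∈ B, a * b = a₂ * b₂ → a = a₂ ∧ b = b₂)

/-- Lemma `2-unique_prod`: if `G` has left 2-unique products and `R`
is a domain, then `RG` has no left engulfing elements: for nonzero `a, b ∈ RG` with
`supp(a·b) ⊆ supp(b)`, one has `supp(a) ⊆ {1}`, i.e. `a ∈ R`. -/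
theorem stmt_1 (R : Type*) (G : Type*) [Ring R] [IsDomain R] [Group G]
    (h2up : LeftTwoUniqueProducts G)
    (a b : MonoidAlgebra R G) (ha : a ≠ 0) (hb : b ≠ 0)
    (hsupp : (a * b).coeff.support ⊆ b.coeff.support) :
    a.coeff.support ⊆ {1} := by
  classical
  intro g hg
  simp only [Finset.mem_singleton]
  by_contra hg1
  -- Apply 2-unique products to A' = insert 1 (supp a), B = supp b.
  set A' : Finset G := insert 1 a.coeff.support with hA'
  have hcard : 2 ≤ A'.card := by
    rw [Nat.succ_le_iff]
    exact Finset.one_lt_card.mpr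
      ⟨1, Finset.mem_insert_self _ _, g, Finset.mem_insert_of_mem hg, fun h => hg1 h.symm⟩
  have hBne : b.coeff.support.Nonempty := Finsupp.support_nonempty_iff.mpr (fun h => hb (MonoidAlgebra.coeff_eq_zero.mp h))
  -- A common "killer" for either unique product whose left part is ≠ 1.
  have key : ∀ α β : G, α ∈ A' → β ∈ b.coeff.support → α ≠ 1 →
      (∀ x ∈ A', ∀ y ∈ b.coeff.support, x * y = α * β → x = α ∧ y = β) → False := by
    intro α β hα hβ hα1 hu
    have hαs : α ∈ a.coeff.support := by
      rcases Finset.mem_insert.mp hα with h | h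
      · exact absurd h hα1
      · exact h
    -- the product α*β is a unique product over supp a × supp b
    have hUM : UniqueMul a.coeff.support b.coeff.support α β := fun x y hx hy hxy =>
      hu x (Finset.mem_insert_of_mem hx) y hy hxy
    have hcoeff : (a * b).coeff (α * β) = a.coeff α * b.coeff β :=
      MonoidAlgebra.coeff_mul_mul_of_uniqueMul hUM
    have hne : (a * b).coeff (α * β) ≠ 0 := by
      rw [hcoeff]
      exact mul_ne_zero (Finsupp.mem_support_iff.mp hαs) (Finsupp.mem_support_iff.mp hβ)
    have hmem : α * β ∈ b.coeff.support := hsupp (Finsupp.mem_support_iff.mpr hne)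
    -- but then (1, α*β) is a second representation
    have := hu 1 (Finset.mem_insert_self _ _) (α * β) hmem (one_mul _)
    exact hα1 this.1.symm
  obtain ⟨a₁, ha₁, b₁, hb₁, a₂, ha₂, b₂, hb₂, hne, hu₁, hu₂⟩ :=
    h2up A' b.coeff.support hcard hBne
  by_cases h1 : a₁ = 1
  · exact key a₂ b₂ ha₂ hb₂ (fun h => hne (h1.trans h.symm)) hu₂
  · exact key a₁ b₁ ha₁ hb₁ h1 hu₁
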